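/- On ℝ², define the probability measures μ = (1/4)δ_{(−1/2, 2)} + (1/4)δ_{(−1/2, −2)} + (1/2)δ_{(1/2, 0)} and ν = (1/4)δ_{(−1/2, −2)} + (1/4)δ_{(−1/2, 0)} + (1/4)δ_{(1/2, −2)} + (1/4)δ_{(1/2, 2)}. Define the probability measures on ℝ² × ℝ²: π_KR = (1/4)δ_{((−1/2,−2),(−1/2,−2))} + (1/4)δ_{((−1/2,2),(−1/2,0))} + (1/4)δ_{((1/2,0),(1/2,−2))} + (1/4)δ_{((1/2,0),(1/2,2))} and π_AT = (1/4)δ_{((−1/2,−2),(1/2,−2))} + (1/4)δ_{((−1/2,2),(1/2,2))} + (1/4)δ_{((1/2,0),(−1/2,−2))} + (1/4)δ_{((1/2,0),(−1/2,0))}. Then: (a) both π_KR and π_AT are couplings of (μ, ν) and both are bicausal; (b) ∫ (|x₁ − y₁|² + |x₂ − y₂|²) dπ_KR = 3 and ∫ (|x₁ − y₁|² + |x₂ − y₂|²) dπ_AT = 2; consequently the infimum of this quadratic cost over bicausal couplings of (μ, ν) is at most 2, and π_KR (the Knothe–Rosenblatt rearrangement of μ and ν) does not attain it. -/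

import Mathlib

open MeasureTheory
open scoped ENNReal

noncomputable section

/-- Conditional independence of the σ-algebras `m₁` and `m₂` given `m'`, under `π`:
the conditional expectation of the product of indicators factorizes. -/
def CondIndepGiven {X : Type*} [mX : MeasurableSpace X] (m' m₁ m₂ : MeasurableSpace X)
    (π : @MeasureTheory.Measure X mX) : Prop :=
  ∀ s t : Set X, MeasurableSet[m₁] s → MeasurableSet[m₂] t →
    MeasureTheory.condExp m' π ((s ∩ t).indicator fun _ => (1 : ℝ)) =ᵐ[π]
      fun ω => MeasureTheory.condExp m' π (s.indicator fun _ => (1 : ℝ)) ω *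
        MeasureTheory.condExp m' π (t.indicator fun _ => (1 : ℝ)) ω

/-- A coupling `π` on `(ℝ×ℝ) × (ℝ×ℝ)` (two two-step processes) is bicausal: given
`σ(x₁)`, `σ(y₁)` is conditionally independent of `σ(x₁,x₂)`, and symmetrically with the
roles of `x` and `y` exchanged. -/
def IsBicausal2 (π : Measure ((ℝ × ℝ) × (ℝ × ℝ))) : Prop :=
  CondIndepGiven (X := (ℝ × ℝ) × (ℝ × ℝ)) (MeasurableSpace.comap (fun q => q.1.1) inferInstance)
    (MeasurableSpace.comap (fun q => q.2.1) inferInstance)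
    (MeasurableSpace.comap Prod.fst inferInstance) π ∧
  CondIndepGiven (X := (ℝ × ℝ) × (ℝ × ℝ)) (MeasurableSpace.comap (fun q => q.2.1) inferInstance)
    (MeasurableSpace.comap (fun q => q.1.1) inferInstance)
    (MeasurableSpace.comap Prod.snd inferInstance) π

/-- The first marginal `μ = (1/4)δ_{(-1/2,2)} + (1/4)δ_{(-1/2,-2)} + (1/2)δ_{(1/2,0)}`. -/
def muEx : Measure (ℝ × ℝ) :=
  (1 / 4 : ℝ≥0∞) • Measure.dirac (-(1 / 2), 2) + (1 / 4 : ℝ≥0∞) • Measure.dirac (-(1 / 2), -2) +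
    (1 / 2 : ℝ≥0∞) • Measure.dirac (1 / 2, 0)

/-- The second marginal
`ν = (1/4)δ_{(-1/2,-2)} + (1/4)δ_{(-1/2,0)} + (1/4)δ_{(1/2,-2)} + (1/4)δ_{(1/2,2)}`. -/
def nuEx : Measure (ℝ × ℝ) :=
  (1 / 4 : ℝ≥0∞) • Measure.dirac (-(1 / 2), -2) + (1 / 4 : ℝ≥0∞) • Measure.dirac (-(1 / 2), 0) +
    (1 / 4 : ℝ≥0∞) • Measure.dirac (1 / 2, -2) + (1 / 4 : ℝ≥0∞) • Measure.dirac (1 / 2, 2)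

/-- The Knothe–Rosenblatt rearrangement of `(muEx, nuEx)`. -/
def piKR : Measure ((ℝ × ℝ) × (ℝ × ℝ)) :=
  (1 / 4 : ℝ≥0∞) • Measure.dirac ((-(1 / 2), -2), (-(1 / 2), -2)) +
    (1 / 4 : ℝ≥0∞) • Measure.dirac ((-(1 / 2), 2), (-(1 / 2), 0)) +
    (1 / 4 : ℝ≥0∞) • Measure.dirac ((1 / 2, 0), (1 / 2, -2)) +
    (1 / 4 : ℝ≥0∞) • Measure.dirac ((1 / 2, 0), (1 / 2, 2))

/-- The alternative bicausal coupling: antitone in the first step, then monotone. -/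
def piAT : Measure ((ℝ × ℝ) × (ℝ × ℝ)) :=
  (1 / 4 : ℝ≥0∞) • Measure.dirac ((-(1 / 2), -2), (1 / 2, -2)) +
    (1 / 4 : ℝ≥0∞) • Measure.dirac ((-(1 / 2), 2), (1 / 2, 2)) +
    (1 / 4 : ℝ≥0∞) • Measure.dirac ((1 / 2, 0), (-(1 / 2), -2)) +
    (1 / 4 : ℝ≥0∞) • Measure.dirac ((1 / 2, 0), (-(1 / 2), 0))

lemma condIndep_of_ae_eq {X : Type*} {m' m₁ m₂ : MeasurableSpace X} [mX : MeasurableSpace X]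
    (hm' : m' ≤ mX) (hm₂ : m₂ ≤ mX) (π : Measure X) [IsFiniteMeasure π]
    (h : ∀ s : Set X, MeasurableSet[m₁] s → ∃ s' : Set X, MeasurableSet[m'] s' ∧
      s.indicator (fun _ => (1 : ℝ)) =ᵐ[π] s'.indicator fun _ => (1 : ℝ)) :
    CondIndepGiven (mX := mX) m' m₁ m₂ π := by
  haveI := isFiniteMeasure_trim (m0 := mX) (μ := π) hm'
  intro s t hs ht
  obtain ⟨s', hs', hae⟩ := h s hs
  have hs'X : MeasurableSet[mX] s' := hm' _ hs'
  have htX : MeasurableSet[mX] t := hm₂ _ ht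
  have hgsm : StronglyMeasurable[m'] (s'.indicator fun _ => (1 : ℝ)) :=
    (@stronglyMeasurable_const _ _ m' _ _).indicator hs'
  have hti := (integrable_const (1 : ℝ) (μ := π)).indicator htX
  have hsi' := (integrable_const (1 : ℝ) (μ := π)).indicator hs'X
  have hmul : (s'.indicator fun _ => (1 : ℝ)) * (t.indicator fun _ => (1 : ℝ))
      = (s' ∩ t).indicator fun _ => (1 : ℝ) := by
    funext x
    by_cases h1 : x ∈ s' <;> by_cases h2 : x ∈ t <;>
      simp [Set.indicator_apply, h1, h2]
  have hprod : (s ∩ t).indicator (fun _ => (1 : ℝ)) =ᵐ[π]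
      (s'.indicator fun _ => (1 : ℝ)) * (t.indicator fun _ => (1 : ℝ)) := by
    filter_upwards [hae] with x hx
    simp only [Pi.mul_apply, ← hx]
    by_cases h1 : x ∈ s <;> by_cases h2 : x ∈ t <;>
      simp [Set.indicator_apply, h1, h2]
  have hprodInt := (integrable_const (1 : ℝ) (μ := π)).indicator (hs'X.inter htX)
  rw [← hmul] at hprodInt
  have h1 : condExp m' π (s.indicator fun _ => (1 : ℝ)) =ᵐ[π] s'.indicator fun _ => (1 : ℝ) := by
    refine (condExp_congr_ae hae).trans ?_
    rw [condExp_of_stronglyMeasurable (m₀ := mX) hm' hgsm hsi']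
  calc condExp m' π ((s ∩ t).indicator fun _ => (1 : ℝ))
      =ᵐ[π] condExp m' π ((s'.indicator fun _ => (1 : ℝ)) * (t.indicator fun _ => (1 : ℝ))) :=
        condExp_congr_ae hprod
    _ =ᵐ[π] (s'.indicator fun _ => (1 : ℝ)) * condExp m' π (t.indicator fun _ => (1 : ℝ)) :=
        condExp_mul_of_stronglyMeasurable_left hgsm hprodInt hti
    _ =ᵐ[π] fun ω => condExp m' π (s.indicator fun _ => (1 : ℝ)) ω *
        condExp m' π (t.indicator fun _ => (1 : ℝ)) ω := by
      filter_upwards [h1] with ω hω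
      simp [Pi.mul_apply, hω]


lemma integrable_dirac'' {α : Type*} [MeasurableSpace α] [MeasurableSingletonClass α]
    {f : α → ℝ} (hf : StronglyMeasurable f) (a : α) : Integrable f (Measure.dirac a) := by
  refine ⟨hf.aestronglyMeasurable, ?_⟩
  simp only [HasFiniteIntegral, lintegral_dirac]
  exact ENNReal.coe_lt_top

lemma int4 {α : Type*} [MeasurableSpace α] [MeasurableSingletonClass α] {f : α → ℝ}
    (hsm : StronglyMeasurable f) (a b c d : α) :
    ∫ x, f x ∂((1 / 4 : ℝ≥0∞) • Measure.dirac a + (1 / 4 : ℝ≥0∞) • Measure.dirac b +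
      (1 / 4 : ℝ≥0∞) • Measure.dirac c + (1 / 4 : ℝ≥0∞) • Measure.dirac d)
    = (f a + f b + f c + f d) / 4 := by
  have hd : ∀ x : α, Integrable f ((1 / 4 : ℝ≥0∞) • Measure.dirac x) := fun x =>
    (integrable_dirac'' hsm x).smul_measure (by norm_num)
  rw [integral_add_measure (((hd a).add_measure (hd b)).add_measure (hd c)) (hd d),
      integral_add_measure ((hd a).add_measure (hd b)) (hd c),
      integral_add_measure (hd a) (hd b),
      integral_smul_measure, integral_smul_measure, integral_smul_measure, integral_smul_measure,
      integral_dirac, integral_dirac, integral_dirac, integral_dirac]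
  norm_num
  ring

lemma costFun_cont : StronglyMeasurable (fun q : (ℝ × ℝ) × (ℝ × ℝ) =>
    (|q.1.1 - q.2.1| ^ 2 + |q.1.2 - q.2.2| ^ 2)) := by
  apply Continuous.stronglyMeasurable
  fun_prop

lemma h44 : (1 / 4 : ℝ≥0∞) + 1 / 4 = 1 / 2 := by
  rw [ENNReal.div_add_div_same, ENNReal.div_eq_div_iff] <;> norm_num

instance : IsFiniteMeasure piKR := by
  constructor
  rw [piKR]
  simp only [Measure.add_apply, Measure.smul_apply, measure_univ, smul_eq_mul, mul_one]
  simp [ENNReal.add_lt_top]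

instance : IsFiniteMeasure piAT := by
  constructor
  rw [piAT]
  simp only [Measure.add_apply, Measure.smul_apply, measure_univ, smul_eq_mul, mul_one]
  simp [ENNReal.add_lt_top]

lemma aeKR : ∀ᵐ q : (ℝ × ℝ) × (ℝ × ℝ) ∂piKR, q.2.1 = q.1.1 := by
  rw [piKR, ae_add_measure_iff, ae_add_measure_iff, ae_add_measure_iff]
  refine ⟨⟨⟨?_, ?_⟩, ?_⟩, ?_⟩ <;>
    · apply Measure.ae_smul_measure
      simp [ae_dirac_eq]

lemma aeAT : ∀ᵐ q : (ℝ × ℝ) × (ℝ × ℝ) ∂piAT, q.2.1 = -q.1.1 := by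
  rw [piAT, ae_add_measure_iff, ae_add_measure_iff, ae_add_measure_iff]
  refine ⟨⟨⟨?_, ?_⟩, ?_⟩, ?_⟩ <;>
    · apply Measure.ae_smul_measure
      simp [ae_dirac_eq]

lemma bicausal_of_ae (π : Measure ((ℝ × ℝ) × (ℝ × ℝ))) [IsFiniteMeasure π] (ε : ℝ)
    (hε : ε ≠ 0)
    (hae : ∀ᵐ q : (ℝ × ℝ) × (ℝ × ℝ) ∂π, q.2.1 = ε * q.1.1) : IsBicausal2 π := by
  have hx1 : Measurable fun q : (ℝ × ℝ) × (ℝ × ℝ) => q.1.1 :=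
    measurable_fst.comp measurable_fst
  have hy1 : Measurable fun q : (ℝ × ℝ) × (ℝ × ℝ) => q.2.1 :=
    measurable_fst.comp measurable_snd
  constructor
  · refine condIndep_of_ae_eq (measurable_iff_comap_le.mp hx1)
      (measurable_iff_comap_le.mp measurable_fst) π ?_
    rintro s ⟨B, hB, rfl⟩
    refine ⟨(fun q : (ℝ × ℝ) × (ℝ × ℝ) => q.1.1) ⁻¹' ((fun r : ℝ => ε * r) ⁻¹' B),
      ⟨(fun r : ℝ => ε * r) ⁻¹' B, hB.preimage (measurable_const_mul ε), rfl⟩, ?_⟩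
    filter_upwards [hae] with q hq
    classical
    simp only [Set.indicator_apply, Set.mem_preimage, hq]
  · refine condIndep_of_ae_eq (measurable_iff_comap_le.mp hy1)
      (measurable_iff_comap_le.mp measurable_snd) π ?_
    rintro s ⟨B, hB, rfl⟩
    refine ⟨(fun q : (ℝ × ℝ) × (ℝ × ℝ) => q.2.1) ⁻¹' ((fun r : ℝ => ε⁻¹ * r) ⁻¹' B),
      ⟨(fun r : ℝ => ε⁻¹ * r) ⁻¹' B, hB.preimage (measurable_const_mul ε⁻¹), rfl⟩, ?_⟩
    filter_upwards [hae] with q hq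
    have h2 : ε⁻¹ * q.2.1 = q.1.1 := by rw [hq, inv_mul_cancel_left₀ hε]
    classical
    simp only [Set.indicator_apply, Set.mem_preimage, h2]

/-- `π_KR` and `π_AT` are bicausal couplings of `(μ, ν)`, with quadratic
costs `3` and `2` respectively; hence the bicausal optimal transport value is at most `2`
and the Knothe–Rosenblatt rearrangement `π_KR` does not attain it. -/
theorem stmt_15 :
    (piKR.map Prod.fst = muEx ∧ piKR.map Prod.snd = nuEx ∧ IsBicausal2 piKR ∧
      piAT.map Prod.fst = muEx ∧ piAT.map Prod.snd = nuEx ∧ IsBicausal2 piAT) ∧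
    ((∫ q : (ℝ × ℝ) × (ℝ × ℝ), (|q.1.1 - q.2.1| ^ 2 + |q.1.2 - q.2.2| ^ 2) ∂piKR) = 3 ∧
      (∫ q : (ℝ × ℝ) × (ℝ × ℝ), (|q.1.1 - q.2.1| ^ 2 + |q.1.2 - q.2.2| ^ 2) ∂piAT) = 2) ∧
    sInf {x : ℝ | ∃ π : Measure ((ℝ × ℝ) × (ℝ × ℝ)),
        π.map Prod.fst = muEx ∧ π.map Prod.snd = nuEx ∧ IsBicausal2 π ∧
        x = ∫ q : (ℝ × ℝ) × (ℝ × ℝ), (|q.1.1 - q.2.1| ^ 2 + |q.1.2 - q.2.2| ^ 2) ∂π} ≤ 2 ∧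
    sInf {x : ℝ | ∃ π : Measure ((ℝ × ℝ) × (ℝ × ℝ)),
        π.map Prod.fst = muEx ∧ π.map Prod.snd = nuEx ∧ IsBicausal2 π ∧
        x = ∫ q : (ℝ × ℝ) × (ℝ × ℝ), (|q.1.1 - q.2.1| ^ 2 + |q.1.2 - q.2.2| ^ 2) ∂π}
      < ∫ q : (ℝ × ℝ) × (ℝ × ℝ), (|q.1.1 - q.2.1| ^ 2 + |q.1.2 - q.2.2| ^ 2) ∂piKR := by
  have mapKRfst : piKR.map Prod.fst = muEx := by
    rw [piKR, muEx, Measure.map_add _ _ measurable_fst, Measure.map_add _ _ measurable_fst,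
      Measure.map_add _ _ measurable_fst, Measure.map_smul, Measure.map_smul, Measure.map_smul,
      Measure.map_smul, Measure.map_dirac' measurable_fst, Measure.map_dirac' measurable_fst,
      Measure.map_dirac' measurable_fst, Measure.map_dirac' measurable_fst, ← h44, add_smul]
    dsimp only
    abel
  have mapKRsnd : piKR.map Prod.snd = nuEx := by
    rw [piKR, nuEx, Measure.map_add _ _ measurable_snd, Measure.map_add _ _ measurable_snd,
      Measure.map_add _ _ measurable_snd, Measure.map_smul, Measure.map_smul, Measure.map_smul,
      Measure.map_smul, Measure.map_dirac' measurable_snd, Measure.map_dirac' measurable_snd,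
      Measure.map_dirac' measurable_snd, Measure.map_dirac' measurable_snd]
  have mapATfst : piAT.map Prod.fst = muEx := by
    rw [piAT, muEx, Measure.map_add _ _ measurable_fst, Measure.map_add _ _ measurable_fst,
      Measure.map_add _ _ measurable_fst, Measure.map_smul, Measure.map_smul, Measure.map_smul,
      Measure.map_smul, Measure.map_dirac' measurable_fst, Measure.map_dirac' measurable_fst,
      Measure.map_dirac' measurable_fst, Measure.map_dirac' measurable_fst, ← h44, add_smul]
    dsimp only
    abel
  have mapATsnd : piAT.map Prod.snd = nuEx := by
    rw [piAT, nuEx, Measure.map_add _ _ measurable_snd, Measure.map_add _ _ measurable_snd,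
      Measure.map_add _ _ measurable_snd, Measure.map_smul, Measure.map_smul, Measure.map_smul,
      Measure.map_smul, Measure.map_dirac' measurable_snd, Measure.map_dirac' measurable_snd,
      Measure.map_dirac' measurable_snd, Measure.map_dirac' measurable_snd]
    dsimp only
    abel
  have costKR : (∫ q : (ℝ × ℝ) × (ℝ × ℝ), (|q.1.1 - q.2.1| ^ 2 + |q.1.2 - q.2.2| ^ 2) ∂piKR)
      = 3 := by
    rw [piKR, int4 costFun_cont]
    norm_num
  have costAT : (∫ q : (ℝ × ℝ) × (ℝ × ℝ), (|q.1.1 - q.2.1| ^ 2 + |q.1.2 - q.2.2| ^ 2) ∂piAT)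
      = 2 := by
    rw [piAT, int4 costFun_cont]
    norm_num
  have bcKR : IsBicausal2 piKR := by
    refine bicausal_of_ae piKR 1 one_ne_zero ?_
    filter_upwards [aeKR] with q hq
    rw [hq, one_mul]
  have bcAT : IsBicausal2 piAT := by
    refine bicausal_of_ae piAT (-1) (by norm_num) ?_
    filter_upwards [aeAT] with q hq
    rw [hq]; ring
  have h2mem : (2 : ℝ) ∈ {x : ℝ | ∃ π : Measure ((ℝ × ℝ) × (ℝ × ℝ)),
      π.map Prod.fst = muEx ∧ π.map Prod.snd = nuEx ∧ IsBicausal2 π ∧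
      x = ∫ q : (ℝ × ℝ) × (ℝ × ℝ), (|q.1.1 - q.2.1| ^ 2 + |q.1.2 - q.2.2| ^ 2) ∂π} :=
    ⟨piAT, mapATfst, mapATsnd, bcAT, costAT.symm⟩
  have hbdd : BddBelow {x : ℝ | ∃ π : Measure ((ℝ × ℝ) × (ℝ × ℝ)),
      π.map Prod.fst = muEx ∧ π.map Prod.snd = nuEx ∧ IsBicausal2 π ∧
      x = ∫ q : (ℝ × ℝ) × (ℝ × ℝ), (|q.1.1 - q.2.1| ^ 2 + |q.1.2 - q.2.2| ^ 2) ∂π} := by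
    refine ⟨0, ?_⟩
    rintro x ⟨π, -, -, -, rfl⟩
    exact integral_nonneg fun q => by positivity
  refine ⟨⟨mapKRfst, mapKRsnd, bcKR, mapATfst, mapATsnd, bcAT⟩, ⟨costKR, costAT⟩,
    csInf_le hbdd h2mem, ?_⟩
  rw [costKR]
  exact lt_of_le_of_lt (csInf_le hbdd h2mem) (by norm_num)

end
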